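/- Let (X, H) be a hypothesis class with X countable, let 0 < ε < 1/2, and let there be given an ε-good complete binary tree of depth T that is shattered by H. Then for every online learner A there exist probability mass functions D_1,...,D_T on X and labels y_1,...,y_T ∈ {0,1} such that, when the examples x_1,...,x_T are sampled independently with x_t ∼ D_t and labeled by y_t: (i) the expected number of mistakes of A, namely Σ_{t=1}^{T} Pr[ A((x_1,y_1),...,(x_{t-1},y_{t-1}), x_t) ≠ y_t ] (probability over the samples and over A's randomized predictions), is at least T/2; and (ii) there exists h ∈ H whose expected number of mistakes, Σ_{t=1}^{T} Pr_{x_t ∼ D_t}[ h(x_t) ≠ y_t ], is at most ε·T. Consequently the expected regret of A with respect to H on this random sequence is at least (1/2 − ε)·T. -/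

import Mathlib

open scoped Classical

/-- The mass that distribution `D` assigns to `{x : h x = 1}`. -/
noncomputable def hmass {X : Type*} (D : X → ℝ) (h : X → Bool) : ℝ :=
  ∑' x, if h x = true then D x else 0

/-- `D` is a probability mass function on `X`. -/
def IsPMF {X : Type*} (D : X → ℝ) : Prop :=
  (∀ x, 0 ≤ D x) ∧ (∑' x, D x) = 1

/-- `D` is an ε-good probability mass function w.r.t. `H`. -/
def GoodPMF {X : Type*} (H : Set (X → Bool)) (ε : ℝ) (D : X → ℝ) : Prop :=
  IsPMF D ∧ ∀ h ∈ H, hmass D h ≤ ε ∨ 1 - ε ≤ hmass D h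

/-- `h` realizes the branch `y` of the distribution-labeled tree `𝒯`: at each node it
goes in direction 1 iff the node's distribution gives `{x : h x = 1}` mass `≥ 1 - ε`. -/
def RealizesDist {X : Type*} (ε : ℝ) (𝒯 : List Bool → X → ℝ) (h : X → Bool)
    (y : List Bool) : Prop :=
  ∀ i : Fin y.length,
    (y.get i = true → 1 - ε ≤ hmass (𝒯 (y.take i)) h) ∧
    (y.get i = false → hmass (𝒯 (y.take i)) h ≤ ε)

/-- `𝒯` is a complete ε-good binary tree of depth `T` shattered by `H`. -/
def GoodTree {X : Type*} (H : Set (X → Bool)) (ε : ℝ) (T : ℕ)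
    (𝒯 : List Bool → X → ℝ) : Prop :=
  (∀ s : List Bool, s.length < T → GoodPMF H ε (𝒯 s)) ∧
  (∀ y : List Bool, y.length = T → ∃ h ∈ H, RealizesDist ε 𝒯 h y)

/-- The history `(x_1,y_1),…,(x_{t-1},y_{t-1})` presented to the learner before round `t`. -/
def histList {X : Type*} {T : ℕ} (xs : Fin T → X) (y : Fin T → Bool) (t : Fin T) :
    List (X × Bool) :=
  List.ofFn fun j : Fin t.1 =>
    (xs ⟨j.1, Nat.lt_of_lt_of_le j.2 (Nat.le_of_lt t.2)⟩,
     y ⟨j.1, Nat.lt_of_lt_of_le j.2 (Nat.le_of_lt t.2)⟩)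

section Helpers
open scoped ENNReal

lemma step_lemma {X : Type*} (n : ℕ) (q : Fin (n + 1) → X → ℝ≥0∞)
    (hlast : ∑' x, q (Fin.last n) x = 1) (G : (Fin n → X) → ℝ≥0∞) :
    ∑' xs : Fin (n + 1) → X, (∏ i, q i (xs i)) * G (Fin.init xs)
      = ∑' zs : Fin n → X, (∏ i : Fin n, q i.castSucc (zs i)) * G zs := by
  rw [show (∑' xs : Fin (n + 1) → X, (∏ i, q i (xs i)) * G (Fin.init xs))
      = ∑' p : (Fin n → X) × X,
          (∏ i, q i ((Fin.snoc p.1 p.2 : Fin (n + 1) → X) i))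
            * G (Fin.init (Fin.snoc p.1 p.2 : Fin (n + 1) → X)) from
    (Equiv.tsum_eq ⟨fun p => Fin.snoc p.1 p.2, fun xs => (Fin.init xs, xs (Fin.last n)),
      fun p => by simp, fun xs => by simp [Fin.snoc_init_self]⟩ _).symm]
  have key : ∀ (zs : Fin n → X) (x : X),
      (∏ i, q i ((Fin.snoc zs x : Fin (n + 1) → X) i))
          * G (Fin.init (Fin.snoc zs x : Fin (n + 1) → X))
        = ((∏ i : Fin n, q i.castSucc (zs i)) * G zs) * q (Fin.last n) x := by
    intro zs x
    rw [Fin.prod_univ_castSucc]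
    simp only [Fin.snoc_castSucc, Fin.snoc_last, Fin.init_snoc]
    ring
  calc ∑' p : (Fin n → X) × X,
        (∏ i, q i ((Fin.snoc p.1 p.2 : Fin (n + 1) → X) i))
          * G (Fin.init (Fin.snoc p.1 p.2 : Fin (n + 1) → X))
      = ∑' p : (Fin n → X) × X,
          ((∏ i : Fin n, q i.castSucc (p.1 i)) * G p.1) * q (Fin.last n) p.2 :=
        tsum_congr fun p => key p.1 p.2
    _ = ∑' zs : Fin n → X, ∑' x : X,
          ((∏ i : Fin n, q i.castSucc (zs i)) * G zs) * q (Fin.last n) x :=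
        ENNReal.tsum_prod (f := fun zs x => ((∏ i : Fin n, q i.castSucc (zs i)) * G zs) * q (Fin.last n) x)
    _ = ∑' zs : Fin n → X, (∏ i : Fin n, q i.castSucc (zs i)) * G zs := by
        refine tsum_congr fun zs => ?_
        rw [ENNReal.tsum_mul_left, hlast, mul_one]

lemma marg_lemma {X : Type*} : ∀ (T : ℕ) (q : Fin T → X → ℝ≥0∞), (∀ i, ∑' x, q i x = 1) →
    ∀ (k : ℕ) (hk : k ≤ T) (G : (Fin k → X) → ℝ≥0∞),
    ∑' xs : Fin T → X, (∏ i, q i (xs i)) * G (fun j => xs (Fin.castLE hk j))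
      = ∑' zs : Fin k → X, (∏ j : Fin k, q (Fin.castLE hk j) (zs j)) * G zs := by
  intro T
  induction T with
  | zero =>
    intro q hq k hk G
    have hk0 : k = 0 := Nat.le_zero.mp hk
    subst hk0
    exact tsum_congr fun xs => rfl
  | succ n ih =>
    intro q hq k hk G
    rcases Nat.lt_or_ge k (n + 1) with h | h
    · have hk' : k ≤ n := Nat.lt_succ_iff.mp h
      have hstep := step_lemma n q (hq _) (fun zs => G (fun j => zs (Fin.castLE hk' j)))
      have hL : ∑' xs : Fin (n + 1) → X, (∏ i, q i (xs i)) * G (fun j => xs (Fin.castLE hk j))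
          = ∑' xs : Fin (n + 1) → X, (∏ i, q i (xs i))
              * G (fun j => Fin.init xs (Fin.castLE hk' j)) := rfl
      rw [hL, hstep, ih (fun i => q i.castSucc) (fun i => hq _) k hk'
        (fun zs => G zs)]
      rfl
    · have hkT : k = n + 1 := le_antisymm hk h
      subst hkT
      refine tsum_congr fun xs => ?_
      congr 1

lemma sum_pi_eq_one {X : Type*} (T : ℕ) (q : Fin T → X → ℝ≥0∞)
    (hq : ∀ i, ∑' x, q i x = 1) :
    ∑' xs : Fin T → X, ∏ i, q i (xs i) = 1 := by
  have h := marg_lemma T q hq 0 (Nat.zero_le T) (fun _ => 1)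
  simp only [mul_one] at h
  rw [h]
  have : ∀ zs : Fin 0 → X, (∏ j : Fin 0, q (Fin.castLE (Nat.zero_le T) j) (zs j)) = 1 := by
    intro zs; simp
  haveI hu : Unique (Fin 0 → X) := ⟨⟨fun i => i.elim0⟩, fun f => funext fun i => i.elim0⟩
  rw [tsum_congr this,
    tsum_eq_single (f := fun _ : Fin 0 → X => (1 : ℝ≥0∞)) default
      (fun b hb => absurd (Subsingleton.elim b _) hb)]

lemma isPMF_summable {X : Type*} {D : X → ℝ} (hD : IsPMF D) : Summable D := by
  by_contra h
  have := hD.2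
  rw [tsum_eq_zero_of_not_summable h] at this
  norm_num at this

lemma isPMF_tsum_ofReal {X : Type*} {D : X → ℝ} (hD : IsPMF D) :
    ∑' x, ENNReal.ofReal (D x) = 1 := by
  rw [← ENNReal.ofReal_tsum_of_nonneg hD.1 (isPMF_summable hD), hD.2, ENNReal.ofReal_one]

lemma take_ofFn' {α : Type*} (g : ℕ → α) {m n : ℕ} (h : m ≤ n) :
    (List.ofFn fun j : Fin n => g j.1).take m = List.ofFn fun j : Fin m => g j.1 := by
  apply List.ext_getElem
  · simp [Nat.min_eq_left h]
  · intro i h1 h2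
    simp [List.getElem_take, List.getElem_ofFn]

lemma getD_ofFn' {α : Type*} (g : ℕ → α) {n i : ℕ} (h : i < n) (d : α) :
    (List.ofFn fun j : Fin n => g j.1).getD i d = g i := by
  rw [List.getD_eq_getElem _ _ (by simpa using h), List.getElem_ofFn]

noncomputable def Ehat {X : Type*} (𝒯 : List Bool → X → ℝ) (A : List (X × Bool) → X → ℝ)
    (l : List Bool) : ℝ≥0∞ :=
  ∑' zs : Fin (l.length + 1) → X,
    (∏ i : Fin (l.length + 1), ENNReal.ofReal (𝒯 (l.take i.1) (zs i))) *
      ENNReal.ofReal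
        (1 - A (List.ofFn fun j : Fin l.length => (zs j.castSucc, l.getD j.1 false))
          (zs (Fin.last l.length)))

noncomputable def Efalse {X : Type*} (𝒯 : List Bool → X → ℝ) (A : List (X × Bool) → X → ℝ)
    (l : List Bool) : ℝ≥0∞ :=
  ∑' zs : Fin (l.length + 1) → X,
    (∏ i : Fin (l.length + 1), ENNReal.ofReal (𝒯 (l.take i.1) (zs i))) *
      ENNReal.ofReal
        (A (List.ofFn fun j : Fin l.length => (zs j.castSucc, l.getD j.1 false))
          (zs (Fin.last l.length)))

lemma Ehat_eq_n {X : Type*} (𝒯 : List Bool → X → ℝ) (A : List (X × Bool) → X → ℝ)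
    (l : List Bool) (n : ℕ) (hn : l.length = n) :
    Ehat 𝒯 A l = ∑' zs : Fin (n + 1) → X,
      (∏ i : Fin (n + 1), ENNReal.ofReal (𝒯 (l.take i.1) (zs i))) *
        ENNReal.ofReal
          (1 - A (List.ofFn fun j : Fin n => (zs j.castSucc, l.getD j.1 false))
            (zs (Fin.last n))) := by
  subst hn; rfl

lemma Efalse_eq_n {X : Type*} (𝒯 : List Bool → X → ℝ) (A : List (X × Bool) → X → ℝ)
    (l : List Bool) (n : ℕ) (hn : l.length = n) :
    Efalse 𝒯 A l = ∑' zs : Fin (n + 1) → X,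
      (∏ i : Fin (n + 1), ENNReal.ofReal (𝒯 (l.take i.1) (zs i))) *
        ENNReal.ofReal
          (A (List.ofFn fun j : Fin n => (zs j.castSucc, l.getD j.1 false))
            (zs (Fin.last n))) := by
  subst hn; rfl

noncomputable def advY {X : Type*} (𝒯 : List Bool → X → ℝ) (A : List (X × Bool) → X → ℝ) :
    ℕ → Bool
  | t => decide ((2 : ℝ≥0∞)⁻¹ ≤ Ehat 𝒯 A (List.ofFn fun j : Fin t => advY 𝒯 A j.1))
  termination_by t => t
  decreasing_by all_goals (have h2 := j.isLt; omega)

lemma advY_eq {X : Type*} (𝒯 : List Bool → X → ℝ) (A : List (X × Bool) → X → ℝ) (t : ℕ) :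
    advY 𝒯 A t = decide ((2 : ℝ≥0∞)⁻¹ ≤ Ehat 𝒯 A (List.ofFn fun j : Fin t => advY 𝒯 A j.1)) := by
  rw [advY]



lemma ehat_add_efalse {X : Type*} (𝒯 : List Bool → X → ℝ) (A : List (X × Bool) → X → ℝ)
    (hA : ∀ hist x, 0 ≤ A hist x ∧ A hist x ≤ 1) (l : List Bool)
    (hl : ∀ i : Fin (l.length + 1), ∑' x, ENNReal.ofReal (𝒯 (l.take i.1) x) = 1) :
    Ehat 𝒯 A l + Efalse 𝒯 A l = 1 := by
  rw [Ehat, Efalse, ← ENNReal.tsum_add]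
  have key : ∀ zs : Fin (l.length + 1) → X,
      (∏ i : Fin (l.length + 1), ENNReal.ofReal (𝒯 (l.take i.1) (zs i))) *
          ENNReal.ofReal
            (1 - A (List.ofFn fun j : Fin l.length => (zs j.castSucc, l.getD j.1 false))
              (zs (Fin.last l.length)))
        + (∏ i : Fin (l.length + 1), ENNReal.ofReal (𝒯 (l.take i.1) (zs i))) *
            ENNReal.ofReal
              (A (List.ofFn fun j : Fin l.length => (zs j.castSucc, l.getD j.1 false))
                (zs (Fin.last l.length)))
        = ∏ i : Fin (l.length + 1), ENNReal.ofReal (𝒯 (l.take i.1) (zs i)) := by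
    intro zs
    have hub := (hA (List.ofFn fun j : Fin l.length => (zs j.castSucc, l.getD j.1 false))
      (zs (Fin.last l.length))).2
    have hlb := (hA (List.ofFn fun j : Fin l.length => (zs j.castSucc, l.getD j.1 false))
      (zs (Fin.last l.length))).1
    rw [← mul_add, ← ENNReal.ofReal_add (by linarith) hlb,
      sub_add_cancel, ENNReal.ofReal_one, mul_one]
  rw [tsum_congr key]
  exact sum_pi_eq_one (l.length + 1) (fun i x => ENNReal.ofReal (𝒯 (l.take i.1) x)) hl

end Helpers

open scoped ENNReal

/-- an ε-good complete binary tree of depth `T` shattered by `H` witnesses a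
regret lower bound: for every (randomized) online learner `A` (where `A hist x` is the
probability of predicting `true`) there are distributions `D_1,…,D_T` and labels
`y_1,…,y_T` such that (i) the expected number of mistakes of `A` on the independent random
sequence `x_t ∼ D_t` labeled by `y_t` is at least `T/2`, and (ii) some `h ∈ H` has
expected number of mistakes at most `ε·T`. -/
theorem stmt_7 {X : Type*} [Countable X] (H : Set (X → Bool))
    (ε : ℝ) (hε0 : 0 < ε) (hε : ε < 1/2) (T : ℕ)
    (𝒯 : List Bool → X → ℝ) (htree : GoodTree H ε T 𝒯)
    (A : List (X × Bool) → X → ℝ) (hA : ∀ hist x, 0 ≤ A hist x ∧ A hist x ≤ 1) :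
    ∃ (D : Fin T → X → ℝ) (y : Fin T → Bool),
      (∀ t, IsPMF (D t)) ∧
      -- (i) expected number of mistakes of the learner is ≥ T/2
      ((T : ℝ) / 2 ≤
        ∑' xs : Fin T → X, (∏ i, D i (xs i)) *
          ∑ t : Fin T,
            (if y t = true then 1 - A (histList xs y t) (xs t)
             else A (histList xs y t) (xs t))) ∧
      -- (ii) some h ∈ H has expected number of mistakes ≤ ε·T
      (∃ h ∈ H, (∑ t : Fin T, ∑' x : X, if h x = y t then 0 else D t x) ≤ ε * T) := by
  classical
  set L : ℕ → List Bool := fun n => List.ofFn fun j : Fin n => advY 𝒯 A j.1 with hLdef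
  have hlen : ∀ n, (L n).length = n := fun n => by simp [hLdef]
  set D : Fin T → X → ℝ := fun t => 𝒯 (L t.1) with hDdef
  set y : Fin T → Bool := fun t => advY 𝒯 A t.1 with hydef
  have hpmf : ∀ t : Fin T, IsPMF (D t) := fun t =>
    (htree.1 (L t.1) (by rw [hlen]; exact t.2)).1
  refine ⟨D, y, hpmf, ?_, ?_⟩
  · -- part (i)
    set q : Fin T → X → ℝ≥0∞ := fun i x => ENNReal.ofReal (D i x) with hqdef
    have hq : ∀ i, ∑' x, q i x = 1 := fun i => isPMF_tsum_ofReal (hpmf i)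
    set g : Fin T → (Fin T → X) → ℝ := fun t xs =>
      if y t = true then 1 - A (histList xs y t) (xs t) else A (histList xs y t) (xs t)
      with hgdef
    have hg0 : ∀ t xs, 0 ≤ g t xs := by
      intro t xs
      simp only [hgdef]
      split
      · linarith [(hA (histList xs y t) (xs t)).2]
      · exact (hA (histList xs y t) (xs t)).1
    have hg1 : ∀ t xs, g t xs ≤ 1 := by
      intro t xs
      simp only [hgdef]
      split
      · linarith [(hA (histList xs y t) (xs t)).1]
      · linarith [(hA (histList xs y t) (xs t)).2]
    set f : (Fin T → X) → ℝ := fun xs => (∏ i, D i (xs i)) * ∑ t, g t xs with hfdef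
    have hf0 : ∀ xs, 0 ≤ f xs := by
      intro xs
      apply mul_nonneg
      · exact Finset.prod_nonneg fun i _ => (hpmf i).1 _
      · exact Finset.sum_nonneg fun t _ => hg0 t xs
    set G : Fin T → (Fin T → X) → ℝ≥0∞ := fun t xs => ENNReal.ofReal (g t xs) with hGdef
    set E : Fin T → ℝ≥0∞ := fun t => ∑' xs : Fin T → X, (∏ i, q i (xs i)) * G t xs with hEdef
    have hFeq : ∀ xs, ENNReal.ofReal (f xs) = ∑ t, (∏ i, q i (xs i)) * G t xs := by
      intro xs
      rw [hfdef]
      rw [ENNReal.ofReal_mul (Finset.prod_nonneg fun i _ => (hpmf i).1 _)]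
      rw [ENNReal.ofReal_sum_of_nonneg (fun t _ => hg0 t xs)]
      rw [ENNReal.ofReal_prod_of_nonneg (fun i _ => (hpmf i).1 _)]
      rw [Finset.mul_sum]
    have hSF : ∑' xs : Fin T → X, ENNReal.ofReal (f xs) = ∑ t, E t := by
      rw [tsum_congr hFeq, Summable.tsum_finsetSum fun t _ => ENNReal.summable]
    have hEub : ∀ t, E t ≤ 1 := by
      intro t
      calc E t ≤ ∑' xs : Fin T → X, ∏ i, q i (xs i) := by
            refine ENNReal.summable.tsum_le_tsum (fun xs => ?_) ENNReal.summable
            calc (∏ i, q i (xs i)) * G t xs ≤ (∏ i, q i (xs i)) * 1 := by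
                  exact mul_le_mul' le_rfl (ENNReal.ofReal_le_one.mpr (hg1 t xs))
              _ = ∏ i, q i (xs i) := mul_one _
        _ = 1 := sum_pi_eq_one T q hq
    have hElb : ∀ t, (2 : ℝ≥0∞)⁻¹ ≤ E t := by
      intro t
      have ht1 : t.1 + 1 ≤ T := t.2
      set Gh : (Fin (t.1 + 1) → X) → ℝ≥0∞ := fun zs => ENNReal.ofReal
        (if advY 𝒯 A t.1 = true
          then 1 - A (List.ofFn fun j : Fin t.1 => (zs j.castSucc, advY 𝒯 A j.1))
                 (zs (Fin.last t.1))
          else A (List.ofFn fun j : Fin t.1 => (zs j.castSucc, advY 𝒯 A j.1))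
                 (zs (Fin.last t.1))) with hGhdef
      have hrestr : ∀ xs : Fin T → X, G t xs = Gh (fun j => xs (Fin.castLE ht1 j)) :=
        fun xs => rfl
      have hE : E t = ∑' zs : Fin (t.1 + 1) → X,
          (∏ j : Fin (t.1 + 1), q (Fin.castLE ht1 j) (zs j)) * Gh zs := by
        have h1 : E t = ∑' xs : Fin T → X,
            (∏ i, q i (xs i)) * Gh (fun j => xs (Fin.castLE ht1 j)) :=
          tsum_congr fun xs => by rw [hrestr xs]
        rw [h1]
        exact marg_lemma T q hq (t.1 + 1) ht1 Gh
      have hq' : ∀ i : Fin ((L t.1).length + 1),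
          ∑' x, ENNReal.ofReal (𝒯 ((L t.1).take i.1) x) = 1 := by
        intro i
        have hi : i.1 ≤ t.1 := Nat.lt_succ_iff.mp (lt_of_lt_of_le i.2 (le_of_eq (by rw [hlen])))
        have htake : (L t.1).take i.1 = L i.1 := take_ofFn' _ hi
        rw [htake]
        exact isPMF_tsum_ofReal (htree.1 (L i.1) (by rw [hlen]; omega)).1
      have htot : Ehat 𝒯 A (L t.1) + Efalse 𝒯 A (L t.1) = 1 :=
        ehat_add_efalse 𝒯 A hA (L t.1) hq'
      have hadvY : advY 𝒯 A t.1
          = decide ((2 : ℝ≥0∞)⁻¹ ≤ Ehat 𝒯 A (L t.1)) := by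
        rw [advY_eq]
      cases hyt : advY 𝒯 A t.1 with
      | true =>
        have hEh : (∑' zs : Fin (t.1 + 1) → X,
            (∏ j : Fin (t.1 + 1), q (Fin.castLE ht1 j) (zs j)) * Gh zs)
            = Ehat 𝒯 A (L t.1) := by
          rw [Ehat_eq_n 𝒯 A (L t.1) t.1 (hlen t.1)]
          refine tsum_congr fun zs => ?_
          congr 1
          · refine Finset.prod_congr rfl fun j _ => ?_
            rw [show (L t.1).take j.1 = L j.1 from by
              rw [hLdef]; exact take_ofFn' _ (Nat.lt_succ_iff.mp j.2)]
            rfl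
          · have hlist : (List.ofFn fun j : Fin t.1 => ((zs j.castSucc : X), advY 𝒯 A j.1))
                = List.ofFn fun j : Fin t.1 => ((zs j.castSucc : X), (L t.1).getD j.1 false) :=
              congrArg List.ofFn (funext fun j =>
                congrArg (Prod.mk (zs j.castSucc)) ((getD_ofFn' _ j.2 false).symm))
            rw [hGhdef]
            simp only [hyt, if_true]
            rw [hlist]
        have hle : (2 : ℝ≥0∞)⁻¹ ≤ Ehat 𝒯 A (L t.1) := by
          rw [hyt] at hadvY
          exact of_decide_eq_true hadvY.symm
        rw [hE, hEh]
        exact hle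
      | false =>
        have hEf : (∑' zs : Fin (t.1 + 1) → X,
            (∏ j : Fin (t.1 + 1), q (Fin.castLE ht1 j) (zs j)) * Gh zs)
            = Efalse 𝒯 A (L t.1) := by
          rw [Efalse_eq_n 𝒯 A (L t.1) t.1 (hlen t.1)]
          refine tsum_congr fun zs => ?_
          congr 1
          · refine Finset.prod_congr rfl fun j _ => ?_
            rw [show (L t.1).take j.1 = L j.1 from by
              rw [hLdef]; exact take_ofFn' _ (Nat.lt_succ_iff.mp j.2)]
            rfl
          · have hlist : (List.ofFn fun j : Fin t.1 => ((zs j.castSucc : X), advY 𝒯 A j.1))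
                = List.ofFn fun j : Fin t.1 => ((zs j.castSucc : X), (L t.1).getD j.1 false) :=
              congrArg List.ofFn (funext fun j =>
                congrArg (Prod.mk (zs j.castSucc)) ((getD_ofFn' _ j.2 false).symm))
            rw [hGhdef]
            simp only [hyt, Bool.false_eq_true, if_false]
            rw [hlist]
        have hnle : ¬ ((2 : ℝ≥0∞)⁻¹ ≤ Ehat 𝒯 A (L t.1)) := by
          rw [hyt] at hadvY
          exact of_decide_eq_false hadvY.symm
        have hle : Ehat 𝒯 A (L t.1) ≤ 2⁻¹ := le_of_not_ge hnle
        have h1 : (1 : ℝ≥0∞) ≤ 2⁻¹ + Efalse 𝒯 A (L t.1) := by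
          rw [← htot]
          exact add_le_add_left hle _
        have h2 : (1 : ℝ≥0∞) - 2⁻¹ ≤ Efalse 𝒯 A (L t.1) := tsub_le_iff_left.mpr h1
        have h3 : (1 : ℝ≥0∞) - 2⁻¹ = 2⁻¹ := by
          rw [← ENNReal.inv_two_add_inv_two, ENNReal.add_sub_cancel_right (by simp)]
        rw [h3] at h2
        rw [hE, hEf]
        exact h2
    have hub : ∑ t, E t ≤ (T : ℝ≥0∞) := by
      calc ∑ t, E t ≤ ∑ _t : Fin T, (1 : ℝ≥0∞) := Finset.sum_le_sum fun t _ => hEub t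
        _ = (T : ℝ≥0∞) := by simp
    have hne : ∑' xs : Fin T → X, ENNReal.ofReal (f xs) ≠ ⊤ := by
      rw [hSF]
      exact ne_top_of_le_ne_top (ENNReal.natCast_ne_top T) hub
    have hsumf : Summable f := by
      have := ENNReal.summable_toReal hne
      exact this.congr fun xs => ENNReal.toReal_ofReal (hf0 xs)
    have hofReal : ENNReal.ofReal (∑' xs, f xs) = ∑' xs : Fin T → X, ENNReal.ofReal (f xs) :=
      ENNReal.ofReal_tsum_of_nonneg hf0 hsumf
    have hlow : ENNReal.ofReal ((T : ℝ) / 2) ≤ ∑' xs : Fin T → X, ENNReal.ofReal (f xs) := by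
      have h2 : ENNReal.ofReal ((T : ℝ) / 2) = (T : ℝ≥0∞) * 2⁻¹ := by
        rw [div_eq_mul_inv, ENNReal.ofReal_mul (by positivity)]
        rw [ENNReal.ofReal_natCast]
        congr 1
        rw [ENNReal.ofReal_inv_of_pos (by norm_num : (0:ℝ) < 2)]
        norm_num
      rw [h2, hSF]
      calc (T : ℝ≥0∞) * 2⁻¹ = ∑ _t : Fin T, (2 : ℝ≥0∞)⁻¹ := by
            simp [Finset.sum_const, Finset.card_univ, nsmul_eq_mul]
        _ ≤ ∑ t, E t := Finset.sum_le_sum fun t _ => hElb t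
    show (T : ℝ) / 2 ≤ ∑' xs : Fin T → X, f xs
    rw [← ENNReal.ofReal_le_ofReal_iff (tsum_nonneg hf0), hofReal]
    exact hlow
  · -- part (ii)
    obtain ⟨h, hH, hreal⟩ := htree.2 (L T) (hlen T)
    refine ⟨h, hH, ?_⟩
    have key : ∀ t : Fin T, (∑' x : X, if h x = y t then 0 else D t x) ≤ ε := by
      intro t
      have hi : t.1 < (L T).length := by rw [hlen]; exact t.2
      have hreal_t := hreal ⟨t.1, hi⟩
      have hget : (L T).get ⟨t.1, hi⟩ = y t := by
        simp [hLdef, hydef, List.get_ofFn]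
      have htake : (L T).take t.1 = L t.1 := by
        rw [hLdef]; exact take_ofFn' _ (le_of_lt t.2)
      have hDsum : Summable (D t) := isPMF_summable (hpmf t)
      have hD0 := (hpmf t).1
      have hs1 : Summable (fun x => if h x = true then D t x else 0) :=
        Summable.of_nonneg_of_le (fun x => by split <;> simp [hD0 x])
          (fun x => by split <;> simp [hD0 x]) hDsum
      have hs2 : Summable (fun x => if h x = true then 0 else D t x) :=
        Summable.of_nonneg_of_le (fun x => by split <;> simp [hD0 x])
          (fun x => by split <;> simp [hD0 x]) hDsum
      have hadd : hmass (D t) h + (∑' x : X, if h x = true then 0 else D t x) = 1 := by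
        rw [hmass, ← hs1.tsum_add hs2]
        rw [← (hpmf t).2]
        exact tsum_congr fun x => by split <;> simp
      cases hyt : y t with
      | true =>
        have h1 : 1 - ε ≤ hmass (𝒯 ((L T).take t.1)) h := by
          apply (hreal_t).1
          rw [hget, hyt]
        rw [htake] at h1
        simp only [hDdef] at hadd
        simp only [hDdef]
        linarith [h1, hadd]
      | false =>
        have h1 : hmass (𝒯 ((L T).take t.1)) h ≤ ε := by
          apply (hreal_t).2
          rw [hget, hyt]
        rw [htake] at h1
        have heq : (∑' x : X, if h x = false then 0 else D t x) = hmass (D t) h := by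
          rw [hmass]
          exact tsum_congr fun x => by cases h x <;> simp
        rw [heq]
        simp only [hDdef]
        exact h1
    calc (∑ t : Fin T, ∑' x : X, if h x = y t then 0 else D t x)
        ≤ ∑ _t : Fin T, ε := Finset.sum_le_sum fun t _ => key t
      _ = ε * T := by simp [Finset.sum_const, Finset.card_univ, mul_comm]
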